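/- Let l be either D or T. A modal formula φ that is satisfiable for l is complete for l if and only if P(φ) = ∅. -/
import Mathlib


/-- Modal formulas in negation normal form, as in the paper:
φ ::= ⊥ | ⊤ | p | ¬p | φ∧φ | φ∨φ | □φ | ◇φ. -/
inductive Form : Type where
  | bot : Form
  | top : Form
  | pos : ℕ → Form
  | npos : ℕ → Form
  | and : Form → Form → Form
  | or : Form → Form → Form
  | box : Form → Form
  | dia : Form → Form
deriving DecidableEq

namespace Form

/-- Negation, defined as usual (by De Morgan dualities). -/
def neg : Form → Form
  | bot => top
  | top => bot
  | pos p => npos p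
  | npos p => pos p
  | and φ ψ => or φ.neg ψ.neg
  | or φ ψ => and φ.neg ψ.neg
  | box φ => dia φ.neg
  | dia φ => box φ.neg

/-- Implication φ → ψ, defined as usual. -/
def imp (φ ψ : Form) : Form := or φ.neg ψ

/-- Bi-implication φ ↔ ψ, defined as usual. -/
def biimp (φ ψ : Form) : Form := and (imp φ ψ) (imp ψ φ)

/-- P(φ): the set of propositional variables occurring in φ. -/
def vars : Form → Finset ℕ
  | bot => ∅
  | top => ∅
  | pos p => {p}
  | npos p => {p}
  | and φ ψ => φ.vars ∪ ψ.vars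
  | or φ ψ => φ.vars ∪ ψ.vars
  | box φ => φ.vars
  | dia φ => φ.vars

/-- Modal depth. -/
def md : Form → ℕ
  | bot => 0
  | top => 0
  | pos _ => 0
  | npos _ => 0
  | and φ ψ => max φ.md ψ.md
  | or φ ψ => max φ.md ψ.md
  | box φ => φ.md + 1
  | dia φ => φ.md + 1

/-- sub(φ): the set of subformulas of φ. -/
def subf : Form → Finset Form
  | bot => {bot}
  | top => {top}
  | pos p => {pos p}
  | npos p => {npos p}
  | and φ ψ => insert (and φ ψ) (φ.subf ∪ ψ.subf)
  | or φ ψ => insert (or φ ψ) (φ.subf ∪ ψ.subf)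
  | box φ => insert (box φ) φ.subf
  | dia φ => insert (dia φ) φ.subf

/-- s̄ub(φ) = sub(φ) ∪ {¬ψ : ψ ∈ sub(φ)}. -/
def subBar (φ : Form) : Finset Form := φ.subf ∪ φ.subf.image neg

/-- □^k φ : k nested boxes. -/
def boxIter : ℕ → Form → Form
  | 0, φ => φ
  | n + 1, φ => box (boxIter n φ)

def isDia : Form → Bool
  | dia _ => true
  | _ => false

def isBox : Form → Bool
  | box _ => true
  | _ => false

end Form

/-- Big conjunction over a finite set of formulas (⋀∅ = ⊤). -/
noncomputable def bigAnd (s : Finset Form) : Form := s.toList.foldr Form.and Form.top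

/-- Big disjunction over a finite set of formulas (⋁∅ = ⊥). -/
noncomputable def bigOr (s : Finset Form) : Form := s.toList.foldr Form.or Form.bot

/-- th(a) = ⋀ a. -/
noncomputable def th (a : Finset Form) : Form := bigAnd a

/-- A finite Kripke model: a nonempty finite set of states, an accessibility
relation and a valuation. -/
structure Model : Type 1 where
  W : Type
  nonempty : Nonempty W
  finite : Finite W
  R : W → W → Prop
  V : W → Set ℕ

/-- Satisfaction M,w ⊨ φ. -/
def Model.sat (M : Model) : M.W → Form → Prop
  | _, .bot => False
  | _, .top => True
  | w, .pos p => p ∈ M.V w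
  | w, .npos p => p ∉ M.V w
  | w, .and φ ψ => M.sat w φ ∧ M.sat w ψ
  | w, .or φ ψ => M.sat w φ ∨ M.sat w ψ
  | w, .box φ => ∀ v, M.R w v → M.sat v φ
  | w, .dia φ => ∃ v, M.R w v ∧ M.sat v φ

/-- The six base logics K, D, T, K4, KD4, S4. -/
inductive BaseLogic : Type where
  | K | D | T | K4 | KD4 | S4
deriving DecidableEq

/-- A logic: a base logic, possibly extended by axiom 5. -/
structure Logic : Type where
  base : BaseLogic
  has5 : Bool
deriving DecidableEq

def Logic.K : Logic := ⟨.K, false⟩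
def Logic.D : Logic := ⟨.D, false⟩
def Logic.T : Logic := ⟨.T, false⟩
def Logic.K4 : Logic := ⟨.K4, false⟩
def Logic.KD4 : Logic := ⟨.KD4, false⟩
def Logic.S4 : Logic := ⟨.S4, false⟩

/-- l + 5. -/
def BaseLogic.plus5 (b : BaseLogic) : Logic := ⟨b, true⟩

/-- M is a model for the logic l (frame conditions). -/
def Model.IsFor (M : Model) (l : Logic) : Prop :=
  (match l.base with
    | .K => True
    | .D => ∀ w, ∃ v, M.R w v
    | .T => ∀ w, M.R w w
    | .K4 => ∀ a b c, M.R a b → M.R b c → M.R a c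
    | .KD4 => (∀ w, ∃ v, M.R w v) ∧ (∀ a b c, M.R a b → M.R b c → M.R a c)
    | .S4 => (∀ w, M.R w w) ∧ (∀ a b c, M.R a b → M.R b c → M.R a c))
  ∧ (l.has5 = true → ∀ a b c, M.R a b → M.R a c → M.R b c)

/-- φ is satisfiable for l: satisfied at some state of some finite model for l. -/
def Satisfiable (l : Logic) (φ : Form) : Prop :=
  ∃ M : Model, M.IsFor l ∧ ∃ w : M.W, M.sat w φ

/-- φ is valid for l: satisfied at every state of every finite model for l. -/
def Valid (l : Logic) (φ : Form) : Prop :=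
  ∀ M : Model, M.IsFor l → ∀ w : M.W, M.sat w φ

/-- φ is complete for l: for every ψ ∈ L(P(φ)), φ→ψ or φ→¬ψ is valid for l. -/
def Complete (l : Logic) (φ : Form) : Prop :=
  ∀ ψ : Form, ψ.vars ⊆ φ.vars → (Valid l (φ.imp ψ) ∨ Valid l (φ.imp ψ.neg))

/-- Z is a bisimulation modulo P from M to M'. -/
def IsBisim (P : Set ℕ) (M M' : Model) (Z : M.W → M'.W → Prop) : Prop :=
  (∃ s s', Z s s') ∧
  ∀ s s', Z s s' →
    (M.V s ∩ P = M'.V s' ∩ P) ∧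
    (∀ t, M.R s t → ∃ t', M'.R s' t' ∧ Z t t') ∧
    (∀ t', M'.R s' t' → ∃ t, M.R s t ∧ Z t t')

/-- (M,a) ∼_P (M',a'). -/
def Bisimilar (P : Set ℕ) (M : Model) (a : M.W) (M' : Model) (a' : M'.W) : Prop :=
  ∃ Z, IsBisim P M M' Z ∧ Z a a'

/-- (M,a) ≡_P (M',a'): the two pointed models satisfy the same formulas of L(P). -/
def EquivP (P : Set ℕ) (M : Model) (a : M.W) (M' : Model) (a' : M'.W) : Prop :=
  ∀ φ : Form, ↑φ.vars ⊆ P → (M.sat a φ ↔ M'.sat a' φ)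

/-- (M,s) is flat (for base logic l, with axiom 5): the carrier is {s}∪W and
R = R1 ∪ R2 with R1 ⊆ {s}×W, R2 an equivalence relation on W, and s ∈ W if
l ∈ {T,S4}. -/
def Flat (l : BaseLogic) (M : Model) (s : M.W) : Prop :=
  ∃ W : Set M.W, (∀ w, w = s ∨ w ∈ W) ∧
    ∃ R1 R2 : M.W → M.W → Prop,
      (∀ x y, M.R x y ↔ (R1 x y ∨ R2 x y)) ∧
      (∀ x y, R1 x y → x = s ∧ y ∈ W) ∧
      (∀ x y, R2 x y → x ∈ W ∧ y ∈ W) ∧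
      (∀ x ∈ W, R2 x x) ∧
      (∀ x y, R2 x y → R2 y x) ∧
      (∀ x y z, R2 x y → R2 y z → R2 x z) ∧
      ((l = .T ∨ l = .S4) → s ∈ W)

/-- A maximal state for l with respect to φ: a maximally l-consistent subset
of s̄ub(φ). -/
def MaxState (l : Logic) (φ : Form) (a : Finset Form) : Prop :=
  a ⊆ φ.subBar ∧ Satisfiable l (th a) ∧ ∀ ψ ∈ φ.subf, ψ ∈ a ∨ ψ.neg ∈ a

/-- D(x) = {◇ψ : ◇ψ ∈ x}. -/
def DSet (x : Finset Form) : Finset Form := x.filter (fun ψ => ψ.isDia = true)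

/-- B(x) = {□ψ : □ψ ∈ x}. -/
def BSet (x : Finset Form) : Finset Form := x.filter (fun ψ => ψ.isBox = true)

/-- A view: a parent-state and a finite set of children-states. -/
structure View : Type where
  parent : Finset Form
  children : Finset (Finset Form)

/-- The view is with respect to φ: all its states are subsets of s̄ub(φ). -/
def View.WF (φ : Form) (S : View) : Prop :=
  S.parent ⊆ φ.subBar ∧ ∀ c ∈ S.children, c ⊆ φ.subBar

/-- A set of formulas is l-closed. -/
def LClosed (l : Logic) (P : Finset ℕ) (s : Finset Form) : Prop :=
  (∀ φ1 φ2 : Form, Form.and φ1 φ2 ∈ s → φ1 ∈ s ∧ φ2 ∈ s) ∧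
  (∀ φ1 φ2 : Form, Form.or φ1 φ2 ∈ s → φ1 ∈ s ∨ φ2 ∈ s) ∧
  ((l.base = .T ∨ l.base = .S4) → ∀ ψ : Form, Form.box ψ ∈ s → ψ ∈ s) ∧
  (∀ p ∈ P, Form.pos p ∈ s ∨ Form.npos p ∈ s)

/-- The view S is l-complete. -/
def ViewLComplete (l : Logic) (P : Finset ℕ) (S : View) : Prop :=
  LClosed l P S.parent ∧
  (∀ c ∈ S.children, LClosed l P c) ∧
  (∀ ψ : Form, Form.dia ψ ∈ S.parent → ∃ c ∈ S.children, ψ ∈ c) ∧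
  (∀ ψ : Form, Form.box ψ ∈ S.parent → ∀ c ∈ S.children, ψ ∈ c) ∧
  ((l.base = .K4 ∨ l.base = .KD4 ∨ l.base = .S4) →
    ∀ ψ : Form, Form.box ψ ∈ S.parent → ∀ c ∈ S.children, Form.box ψ ∈ c) ∧
  (l.base = .KD4 → S.children.Nonempty)

/-- The view S is consistent for l: every one of its states is consistent. -/
def ViewConsistent (l : Logic) (S : View) : Prop :=
  Satisfiable l (th S.parent) ∧ ∀ c ∈ S.children, Satisfiable l (th c)

/-- d = max{md(th(c')) : c' ∈ C(S)}. -/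
noncomputable def childDepth (S : View) : ℕ := S.children.sup (fun c => (th c).md)

/-- A K-maximal child-state: a maximally K-consistent subset of s̄ub_d(φ). -/
def KMaxChild (φ : Form) (d : ℕ) (c : Finset Form) : Prop :=
  c ⊆ φ.subBar.filter (fun ψ => ψ.md ≤ d) ∧
  Satisfiable Logic.K (th c) ∧
  ∀ ψ ∈ φ.subf, ψ.md ≤ d → (ψ ∈ c ∨ ψ.neg ∈ c)

/-- S' completes S (for logic l, with respect to φ). -/
def ViewCompletes (l : Logic) (φ : Form) (S' S : View) : Prop :=
  ViewLComplete l φ.vars S' ∧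
  S.parent ⊆ S'.parent ∧
  (∀ a ∈ S.children, ∃ a' ∈ S'.children, a ⊆ a') ∧
  (l.base = .K → ∀ a' ∈ S'.children, KMaxChild φ (childDepth S') a') ∧
  (l.base ≠ .K → ∀ a' ∈ S'.children, MaxState l φ a')

/-- The depth-0 normal form ⋀_{p∈S} p ∧ ⋀_{p∈P∖S} ¬p. -/
noncomputable def nf0 (P S : Finset ℕ) : Form :=
  Form.and (bigAnd (S.image Form.pos)) (bigAnd ((P \ S).image Form.npos))

/-- Fine's normal forms F_P^d. -/
noncomputable def NF (P : Finset ℕ) : ℕ → Set Form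
  | 0 => { χ | ∃ S ⊆ P, χ = nf0 P S }
  | d + 1 => { χ | ∃ S : Finset Form, ↑S ⊆ NF P d ∧ ∃ S0 ⊆ P,
      χ = Form.and (nf0 P S0)
            (Form.and (bigAnd (S.image Form.dia)) (Form.box (bigOr S))) }

/-- φ is complete up to its depth for l. -/
def CompleteUpToDepth (l : Logic) (φ : Form) : Prop :=
  ∀ ψ : Form, ψ.vars ⊆ φ.vars → ψ.md ≤ φ.md →
    (Valid l (φ.imp ψ) ∨ Valid l (φ.imp ψ.neg))

namespace Stmt6Aux

/-- Truth value of a variable-free formula over serial frames. -/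
def fval : Form → Bool
  | .bot => false
  | .top => true
  | .pos _ => false
  | .npos _ => true
  | .and a b => fval a && fval b
  | .or a b => fval a || fval b
  | .box a => fval a
  | .dia a => fval a

lemma sat_neg (M : Model) (χ : Form) : ∀ w, M.sat w χ.neg ↔ ¬ M.sat w χ := by
  induction χ with
  | bot => intro w; simp [Form.neg, Model.sat]
  | top => intro w; simp [Form.neg, Model.sat]
  | pos p => intro w; simp [Form.neg, Model.sat]
  | npos p => intro w; simp [Form.neg, Model.sat]
  | and a b iha ihb => intro w; simp [Form.neg, Model.sat, iha, ihb]; tauto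
  | or a b iha ihb => intro w; simp [Form.neg, Model.sat, iha, ihb, not_or]
  | box a ih => intro w; simp [Form.neg, Model.sat, ih]
  | dia a ih => intro w; simp [Form.neg, Model.sat, ih]

lemma vars_neg (χ : Form) : χ.neg.vars = χ.vars := by
  induction χ <;> simp [Form.neg, Form.vars, *]

lemma fval_neg (χ : Form) : fval χ.neg = ! fval χ := by
  induction χ <;> simp [Form.neg, fval, *]

lemma sat_fval (M : Model) (hser : ∀ w, ∃ v, M.R w v) :
    ∀ χ : Form, χ.vars = ∅ → ∀ w, M.sat w χ ↔ fval χ = true := by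
  intro χ
  induction χ with
  | bot => intro _ w; simp [Model.sat, fval]
  | top => intro _ w; simp [Model.sat, fval]
  | pos p => intro h; simp [Form.vars] at h
  | npos p => intro h; simp [Form.vars] at h
  | and a b iha ihb =>
      intro h w
      rw [Form.vars, Finset.union_eq_empty] at h
      simp [Model.sat, fval, iha h.1, ihb h.2]
  | or a b iha ihb =>
      intro h w
      rw [Form.vars, Finset.union_eq_empty] at h
      simp [Model.sat, fval, iha h.1, ihb h.2]
  | box a ih =>
      intro h w
      have h' : a.vars = ∅ := h
      simp only [Model.sat, fval]
      constructor
      · intro hb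
        obtain ⟨v, hv⟩ := hser w
        exact (ih h' v).mp (hb v hv)
      · intro hb v hv
        exact (ih h' v).mpr hb
  | dia a ih =>
      intro h w
      have h' : a.vars = ∅ := h
      simp only [Model.sat, fval]
      constructor
      · rintro ⟨v, _, hs⟩; exact (ih h' v).mp hs
      · intro hb
        obtain ⟨v, hv⟩ := hser w
        exact ⟨v, hv, (ih h' v).mpr hb⟩

lemma isFor_serial (l : Logic) (hl : l = Logic.D ∨ l = Logic.T) (M : Model)
    (hM : M.IsFor l) : ∀ w, ∃ v, M.R w v := by
  rcases hl with rfl | rfl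
  · exact fun w => hM.1 w
  · exact fun w => ⟨w, hM.1 w⟩

/-- p ∧ □(p ∧ □(⋯ p)) with k boxes. -/
def chainBox (p : ℕ) : ℕ → Form
  | 0 => .pos p
  | k + 1 => .and (.pos p) (.box (chainBox p k))

def diaIter : ℕ → Form → Form
  | 0, χ => χ
  | k + 1, χ => .dia (diaIter k χ)

lemma vars_chainBox (p : ℕ) : ∀ k, (chainBox p k).vars = {p} := by
  intro k; induction k with
  | zero => rfl
  | succ k ih => simp [chainBox, Form.vars, ih]

lemma vars_diaIter (χ : Form) : ∀ k, (diaIter k χ).vars = χ.vars := by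
  intro k; induction k with
  | zero => rfl
  | succ k ih => simpa [diaIter, Form.vars] using ih

/-- The modified model: counters up to d, plus a deep state z where p is b. -/
def Md (M : Model) (d : ℕ) (b : Bool) (p : ℕ) : Model where
  W := (M.W × Fin (d + 1)) ⊕ Unit
  nonempty := ⟨Sum.inr ()⟩
  finite := by haveI := M.finite; infer_instance
  R := fun x y =>
    match x, y with
    | Sum.inl (s, i), Sum.inl (t, j) => M.R s t ∧ ((j : ℕ) = i ∨ (j : ℕ) = i + 1)
    | Sum.inl (_, i), Sum.inr _ => (i : ℕ) = d
    | Sum.inr _, Sum.inr _ => True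
    | Sum.inr _, Sum.inl _ => False
  V := fun x =>
    match x with
    | Sum.inl (s, _) => M.V s
    | Sum.inr _ => if b then {p} else ∅

lemma Md_serial (M : Model) (hser : ∀ w, ∃ v, M.R w v) (d : ℕ) (b : Bool) (p : ℕ) :
    ∀ x, ∃ y, (Md M d b p).R x y := by
  rintro (⟨s, i⟩ | u)
  · obtain ⟨t, ht⟩ := hser s
    exact ⟨Sum.inl (t, i), ht, Or.inl rfl⟩
  · exact ⟨Sum.inr (), trivial⟩

lemma Md_refl (M : Model) (href : ∀ w, M.R w w) (d : ℕ) (b : Bool) (p : ℕ) :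
    ∀ x, (Md M d b p).R x x := by
  rintro (⟨s, i⟩ | u)
  · exact ⟨href s, Or.inl rfl⟩
  · trivial

lemma sat_Md (M : Model) (d : ℕ) (b : Bool) (p : ℕ) :
    ∀ χ : Form, ∀ (s : M.W) (i : Fin (d + 1)), χ.md + (i : ℕ) ≤ d →
      ((Md M d b p).sat (Sum.inl (s, i)) χ ↔ M.sat s χ) := by
  intro χ
  induction χ with
  | bot => intro s i h; simp [Model.sat]
  | top => intro s i h; simp [Model.sat]
  | pos q => intro s i h; rfl
  | npos q => intro s i h; rfl
  | and a c iha ihc =>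
      intro s i h
      simp only [Form.md] at h
      show (_ ∧ _) ↔ (_ ∧ _)
      rw [iha s i (by omega), ihc s i (by omega)]
  | or a c iha ihc =>
      intro s i h
      simp only [Form.md] at h
      show (_ ∨ _) ↔ (_ ∨ _)
      rw [iha s i (by omega), ihc s i (by omega)]
  | box a ih =>
      intro s i h
      simp only [Form.md] at h
      have hi := i.isLt
      constructor
      · intro hb v hv
        have hR : (Md M d b p).R (Sum.inl (s, i)) (Sum.inl (v, ⟨(i : ℕ) + 1, by omega⟩)) :=
          ⟨hv, Or.inr rfl⟩
        exact (ih v ⟨(i : ℕ) + 1, by omega⟩ (show a.md + ((i:ℕ)+1) ≤ d by omega)).mp (hb _ hR)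
      · rintro hb (⟨t, j⟩ | u) hx
        · obtain ⟨hR, hj⟩ := hx
          exact (ih t j (by omega)).mpr (hb t hR)
        · have hx' : (i : ℕ) = d := hx
          omega
  | dia a ih =>
      intro s i h
      simp only [Form.md] at h
      have hi := i.isLt
      constructor
      · rintro ⟨(⟨t, j⟩ | u), hx, hs⟩
        · obtain ⟨hR, hj⟩ := hx
          exact ⟨t, hR, (ih t j (by omega)).mp hs⟩
        · exact absurd (show (i:ℕ) = d from hx) (by omega)
      · rintro ⟨t, ht, hs⟩
        exact ⟨Sum.inl (t, ⟨(i : ℕ) + 1, by omega⟩), ⟨ht, Or.inr rfl⟩,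
          (ih t ⟨(i : ℕ) + 1, by omega⟩ (show a.md + ((i:ℕ)+1) ≤ d by omega)).mpr hs⟩

lemma satz_chain_true (M : Model) (d p : ℕ) :
    ∀ k, (Md M d true p).sat (Sum.inr ()) (chainBox p k) := by
  intro k
  induction k with
  | zero => show p ∈ (if true then {p} else (∅ : Set ℕ)); simp
  | succ k ih =>
      refine ⟨by show p ∈ (if true then {p} else (∅ : Set ℕ)); simp, ?_⟩
      rintro (⟨t, j⟩ | u) hx
      · exact absurd hx (fun h => h)
      · exact ih

lemma sat_dia_true (M : Model) (hser : ∀ w, ∃ v, M.R w v) (d p : ℕ) :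
    ∀ k (s : M.W) (i : Fin (d + 1)), (i : ℕ) + k = d + 1 →
      (Md M d true p).sat (Sum.inl (s, i)) (diaIter k (chainBox p (d + 1))) := by
  intro k
  induction k with
  | zero => intro s i h; have := i.isLt; omega
  | succ k ih =>
      intro s i h
      by_cases hi : (i : ℕ) = d
      · have hk : k = 0 := by omega
        subst hk
        exact ⟨Sum.inr (), hi, satz_chain_true M d p (d + 1)⟩
      · have hlt := i.isLt
        obtain ⟨t, ht⟩ := hser s
        exact ⟨Sum.inl (t, ⟨(i : ℕ) + 1, by omega⟩), ⟨ht, Or.inr rfl⟩,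
          ih t ⟨(i : ℕ) + 1, by omega⟩ (show (i:ℕ)+1+k = d+1 by omega)⟩

lemma not_satz_chain_false (M : Model) (d p : ℕ) :
    ∀ k, ¬ (Md M d false p).sat (Sum.inr ()) (chainBox p k) := by
  intro k
  cases k with
  | zero =>
      intro h
      have : p ∈ (if false then {p} else (∅ : Set ℕ)) := h
      simp at this
  | succ k =>
      intro h
      have : p ∈ (if false then {p} else (∅ : Set ℕ)) := h.1
      simp at this

lemma not_sat_chain_false (M : Model) (hser : ∀ w, ∃ v, M.R w v) (d p : ℕ) :
    ∀ k (s : M.W) (i : Fin (d + 1)), d + 1 ≤ (i : ℕ) + k →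
      ¬ (Md M d false p).sat (Sum.inl (s, i)) (chainBox p k) := by
  intro k
  induction k with
  | zero => intro s i h _; have := i.isLt; omega
  | succ k ih =>
      rintro s i h ⟨hp, hbox⟩
      by_cases hi : (i : ℕ) = d
      · exact not_satz_chain_false M d p k (hbox (Sum.inr ()) hi)
      · have hlt := i.isLt
        obtain ⟨t, ht⟩ := hser s
        exact ih t ⟨(i : ℕ) + 1, by omega⟩ (show d+1 ≤ (i:ℕ)+1+k by omega)
          (hbox (Sum.inl (t, ⟨(i : ℕ) + 1, by omega⟩)) ⟨ht, Or.inr rfl⟩)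

lemma not_sat_dia_false (M : Model) (hser : ∀ w, ∃ v, M.R w v) (d p : ℕ) :
    ∀ k (x : (Md M d false p).W), ¬ (Md M d false p).sat x (diaIter k (chainBox p (d + 1))) := by
  intro k
  induction k with
  | zero =>
      rintro (⟨s, i⟩ | u)
      · exact not_sat_chain_false M hser d p (d + 1) s i (by omega)
      · exact not_satz_chain_false M d p (d + 1)
  | succ k ih =>
      rintro x ⟨v, _, hv⟩
      exact ih v hv

end Stmt6Aux

/-- for l ∈ {D,T}, a satisfiable formula is complete for l iff
it has no propositional variables. -/
theorem stmt6 (l : Logic) (hl : l = Logic.D ∨ l = Logic.T)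
    (φ : Form) (hsat : Satisfiable l φ) :
    Complete l φ ↔ φ.vars = ∅ := by
  open Stmt6Aux in
  constructor
  · -- Complete → no variables
    intro hcomp
    by_contra hne
    obtain ⟨p, hp⟩ := Finset.nonempty_iff_ne_empty.mpr hne
    obtain ⟨M, hM, w, hw⟩ := hsat
    have hser := isFor_serial l hl M hM
    set d := φ.md with hd
    set ψ := diaIter (d + 1) (chainBox p (d + 1)) with hψ
    have hψv : ψ.vars ⊆ φ.vars := by
      rw [hψ, vars_diaIter, vars_chainBox]
      simpa using hp
    have hMdIsFor : ∀ b, (Md M d b p).IsFor l := by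
      intro b
      rcases hl with rfl | rfl
      · exact ⟨Md_serial M hser d b p, fun h => by simp [Logic.D] at h⟩
      · exact ⟨Md_refl M (fun x => hM.1 x) d b p, fun h => by simp [Logic.T] at h⟩
    have hsatφ : ∀ b, (Md M d b p).sat (Sum.inl (w, ⟨0, Nat.succ_pos d⟩)) φ :=
      fun b => (sat_Md M d b p φ w ⟨0, Nat.succ_pos d⟩ (show φ.md + 0 ≤ d by rw [hd]; omega)).mpr hw
    rcases hcomp ψ hψv with hval | hval
    · have h2 := hval (Md M d false p) (hMdIsFor false) (Sum.inl (w, ⟨0, Nat.succ_pos d⟩))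
      simp only [Form.imp, Model.sat] at h2
      rcases h2 with hn | hy
      · exact (sat_neg _ φ _).mp hn (hsatφ false)
      · exact not_sat_dia_false M hser d p (d + 1) _ hy
    · have h2 := hval (Md M d true p) (hMdIsFor true) (Sum.inl (w, ⟨0, Nat.succ_pos d⟩))
      simp only [Form.imp, Model.sat] at h2
      rcases h2 with hn | hy
      · exact (sat_neg _ φ _).mp hn (hsatφ true)
      · exact (sat_neg _ ψ _).mp hy
          (sat_dia_true M hser d p (d + 1) w ⟨0, Nat.succ_pos d⟩ (show (0:ℕ)+(d+1) = d+1 by omega))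
  · -- no variables → Complete
    intro hempty ψ hvars
    have hψ : ψ.vars = ∅ := Finset.subset_empty.mp (hempty ▸ hvars)
    by_cases hv : fval ψ = true
    · left
      intro N hN x
      have hser := isFor_serial l hl N hN
      exact Or.inr ((sat_fval N hser ψ hψ x).mpr hv)
    · right
      intro N hN x
      have hser := isFor_serial l hl N hN
      refine Or.inr ((sat_fval N hser ψ.neg (by rw [vars_neg]; exact hψ) x).mpr ?_)
      rw [fval_neg]
      simp [Bool.not_eq_true] at hv ⊢
      exact hv
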